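/- arXiv:2212.12918 — 4 statements merged into one kernel-verified Lean document; each statement's English description precedes it below -/
import Mathlib

section
/- Let D be a nonabelian finite group with trivial center such that every proper nontrivial normal subgroup of D is its unique Sylow r-subgroup (for a fixed prime r). Then for every finite index set I and every surjective homomorphism π : D^I → D, there exists i ∈ I such that ker(π) = ker(π_i), where π_i : D^I → D is the i-th coordinate projection. -/
/-- Let `D` be a nonabelian finite group with trivial center such that every
proper nontrivial normal subgroup of `D` is its unique Sylow `r`-subgroup (`r` a fixed prime).
Then for every finite index set `I` and surjective homomorphism `π : D^I → D` there is `i ∈ I`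
with `ker π = ker π_i`, where `π_i` is the `i`-th coordinate projection. -/
theorem stmt_5 (D : Type) [Group D] [Finite D] (r : ℕ) (hr : r.Prime)
    (hnab : ∃ a b : D, a * b ≠ b * a)
    (hcenter : Subgroup.center D = ⊥)
    (S : Sylow r D)
    (hnorm : ∀ N : Subgroup D, N.Normal → N ≠ ⊥ → N ≠ ⊤ → N = (S : Subgroup D))
    (I : Type) [Finite I] (π : (I → D) →* D) (hπ : Function.Surjective π) :
    ∃ i : I, π.ker = (Pi.evalMonoidHom (fun _ : I => D) i).ker := by
  classical
  obtain ⟨a, b, hab⟩ := hnab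
  have hDnt : Nontrivial D := ⟨a, b, fun h => hab (by rw [h])⟩
  letI : Fintype I := Fintype.ofFinite I
  -- the images of the coordinate embeddings
  set N : I → Subgroup D := fun i =>
    (π.comp (MonoidHom.mulSingle (fun _ : I => D) i)).range with hN
  -- each N i is normal
  have hNnorm : ∀ i, (N i).Normal := by
    intro i
    constructor
    intro n hn g
    obtain ⟨x, rfl⟩ := hn
    obtain ⟨f, rfl⟩ := hπ g
    refine ⟨f i * x * (f i)⁻¹, ?_⟩
    simp only [MonoidHom.comp_apply, MonoidHom.mulSingle_apply]
    rw [← map_inv, ← map_mul, ← map_mul]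
    congr 1
    funext j
    by_cases hj : j = i
    · subst hj; simp [Pi.mulSingle_apply]
    · simp [Pi.mulSingle_apply, hj]
  -- S ≠ ⊤
  have hSne : (S : Subgroup D) ≠ ⊤ := by
    intro hS
    have hP : IsPGroup r D :=
      IsPGroup.of_equiv (hS ▸ S.2) Subgroup.topEquiv
    haveI := Fact.mk hr
    have hnt := hP.center_nontrivial
    rw [hcenter] at hnt
    obtain ⟨x, y, hxy⟩ := hnt
    exact hxy (Subsingleton.elim x y)
  -- some N i is not ≤ S, hence = ⊤
  have hsup : ∃ i, N i = ⊤ := by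
    by_contra h
    push_neg at h
    have hle : ∀ i, N i ≤ (S : Subgroup D) := by
      intro i
      by_cases hbot : N i = ⊥
      · rw [hbot]; exact bot_le
      · exact le_of_eq (hnorm (N i) (hNnorm i) hbot (h i))
    have : (⊤ : Subgroup D) ≤ (S : Subgroup D) := by
      intro d _
      obtain ⟨f, rfl⟩ := hπ d
      rw [show π f = Finset.univ.noncommProd (fun i => π (Pi.mulSingle i (f i))) _ from (congrArg π (Finset.noncommProd_mulSingle f).symm).trans (Finset.univ.map_noncommProd _ _ π)]
      exact Subgroup.noncommProd_mem _ _ (fun i _ => hle i ⟨f i, rfl⟩)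
    exact hSne (top_le_iff.mp this)
  obtain ⟨i, hi⟩ := hsup
  -- for j ≠ i, N j = ⊥
  have hzero : ∀ j, j ≠ i → ∀ y : D, π (Pi.mulSingle j y) = 1 := by
    intro j hj y
    have hmem : π (Pi.mulSingle j y) ∈ Subgroup.center D := by
      rw [Subgroup.mem_center_iff]
      intro d
      have hd : d ∈ N i := hi ▸ Subgroup.mem_top d
      obtain ⟨x, rfl⟩ := hd
      simp only [MonoidHom.comp_apply, MonoidHom.mulSingle_apply]
      rw [← map_mul, ← map_mul]
      congr 1
      exact (Pi.mulSingle_commute (f := fun _ : I => D) hj y x).eq.symm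
    rw [hcenter] at hmem
    exact hmem
  refine ⟨i, ?_⟩
  -- inclusion ker π_i ⊆ ker π
  have hle : (Pi.evalMonoidHom (fun _ : I => D) i).ker ≤ π.ker := by
    intro f hf
    have hfi : f i = 1 := hf
    have : π f ∈ (⊥ : Subgroup D) := by
      rw [show π f = Finset.univ.noncommProd (fun i => π (Pi.mulSingle i (f i))) _ from (congrArg π (Finset.noncommProd_mulSingle f).symm).trans (Finset.univ.map_noncommProd _ _ π)]
      refine Subgroup.noncommProd_mem _ _ (fun j _ => ?_)
      rw [Subgroup.mem_bot]
      by_cases hj : j = i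
      · subst hj; rw [hfi]; simp
      · exact hzero j hj (f j)
    rwa [Subgroup.mem_bot] at this
  -- cardinality argument
  have hπi : Function.Surjective (Pi.evalMonoidHom (fun _ : I => D) i) := by
    intro d; exact ⟨fun _ => d, rfl⟩
  have hcard : ∀ (φ : (I → D) →* D), Function.Surjective φ →
      Nat.card (I → D) = Nat.card D * Nat.card φ.ker := by
    intro φ hφ
    rw [Subgroup.card_eq_card_quotient_mul_card_subgroup φ.ker]
    congr 1
    exact Nat.card_congr (QuotientGroup.quotientKerEquivOfSurjective φ hφ).toEquiv
  have h1 := hcard π hπ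
  have h2 := hcard _ hπi
  have hDpos : 0 < Nat.card D := Nat.card_pos
  have heq : Nat.card π.ker = Nat.card (Pi.evalMonoidHom (fun _ : I => D) i).ker :=
    Nat.eq_of_mul_eq_mul_left hDpos (h1.symm.trans h2)
  exact (Subgroup.eq_of_le_of_card_ge hle heq.le).symm
end

section
/- Let G and E be profinite groups, and let G ⋆ E denote their free profinite product. Suppose G is torsion-free away from a distinguished set of involutions and E is torsion-free (e.g., E projective). Then every involution of G ⋆ E is conjugate in G ⋆ E to an involution lying in G or in E. -/
noncomputable section
namespace Stmt11
open scoped Classical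

variable {Q : Type} [Group Q]

abbrev T (t : Q) : Subgroup Q := Subgroup.zpowers t
abbrev Om (t : Q) : Type := Q ⧸ T t
def om0 (t : Q) : Om t := ((1 : Q) : Q ⧸ T t)
def sec (t : Q) : Om t → Q := fun ω => if ω = om0 t then 1 else ω.out

lemma mk_sec (t : Q) (ω : Om t) : ((sec t ω : Q) : Q ⧸ T t) = ω := by
  unfold sec
  split_ifs with h
  · rw [h]; rfl
  · exact QuotientGroup.out_eq' ω

lemma sec_om0 (t : Q) : sec t (om0 t) = 1 := if_pos rfl

variable (t : Q)

lemma mem_T_iff (h2 : t * t = 1) (w : Q) : w ∈ T t ↔ w = 1 ∨ w = t := by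
  constructor
  · rintro ⟨k, rfl⟩
    have h2' : t ^ (2:ℤ) = 1 := by
      rw [show (2:ℤ) = 1 + 1 by norm_num, zpow_add, zpow_one, h2]
    have : t ^ k = t ^ (k % 2) := by
      conv_lhs => rw [← Int.emod_add_mul_ediv k 2]
      rw [zpow_add, zpow_mul, h2', one_zpow, mul_one]
    show t ^ k = 1 ∨ t ^ k = t
    rcases Int.emod_two_eq_zero_or_one k with h | h <;> rw [this, h]
    · left; exact zpow_zero t
    · right; exact zpow_one t
  · rintro (rfl | rfl)
    · exact Subgroup.one_mem _
    · exact Subgroup.mem_zpowers _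

def tau (u : Q) : Q := (sec t ((u : Q ⧸ T t)))⁻¹ * u

lemma tau_mem (u : Q) : tau t u ∈ T t := by
  have := mk_sec t ((u : Q ⧸ T t))
  exact (QuotientGroup.eq).mp this

def eps (u : Q) : ZMod 2 := if tau t u = 1 then 0 else 1

lemma tau_mul (v u : Q) :
    tau t (v * u) = tau t (v * sec t ((u : Q ⧸ T t))) * tau t u := by
  have hmk : ((v * u : Q) : Q ⧸ T t) = ((v * sec t ((u : Q ⧸ T t)) : Q) : Q ⧸ T t) := by
    have h1 : ((v * u : Q) : Q ⧸ T t) = v • ((u : Q) : Q ⧸ T t) := rfl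
    have h2 : ((v * sec t ((u:Q ⧸ T t)) : Q) : Q ⧸ T t)
        = v • ((sec t ((u:Q ⧸ T t)) : Q) : Q ⧸ T t) := rfl
    rw [h1, h2, mk_sec]
  unfold tau
  rw [← hmk]
  group

lemma eps_mul (h2 : t * t = 1) (hne : t ≠ 1) (v u : Q) :
    eps t (v * u) = eps t (v * sec t ((u : Q ⧸ T t))) + eps t u := by
  have key := tau_mul t v u
  have m1 := (mem_T_iff t h2 _).mp (tau_mem t (v * sec t ((u : Q ⧸ T t))))
  have m2 := (mem_T_iff t h2 _).mp (tau_mem t u)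
  unfold eps
  rcases m1 with e1 | e1 <;> rcases m2 with e2 | e2 <;>
    rw [e1, e2] at key <;> rw [e1, e2] <;>
    simp only [mul_one, one_mul, h2] at key <;> rw [key] <;> simp [hne]
  decide

def del (q' : Q) : Om t → ZMod 2 := fun ω => eps t (q'⁻¹ * sec t ω)

lemma del_one (ω : Om t) : del t 1 ω = 0 := by
  unfold del eps tau
  rw [inv_one, one_mul, mk_sec]
  simp

lemma smul_mk_eq (v u : Q) : (v • ((u : Q) : Q ⧸ T t)) = ((v * u : Q) : Q ⧸ T t) := rfl

lemma del_cocycle (h2 : t * t = 1) (hne : t ≠ 1) (q₁ q₂ : Q) (ω : Om t) :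
    del t (q₁ * q₂) ω = del t q₁ ω + del t q₂ (q₁⁻¹ • ω) := by
  unfold del
  have h1 : (q₁ * q₂)⁻¹ * sec t ω = q₂⁻¹ * (q₁⁻¹ * sec t ω) := by group
  rw [h1, eps_mul t h2 hne]
  have hmk : ((q₁⁻¹ * sec t ω : Q) : Q ⧸ T t) = q₁⁻¹ • ω := by
    rw [← smul_mk_eq, mk_sec]
  rw [hmk, add_comm]

lemma del_t_om0 (h2 : t * t = 1) (hne : t ≠ 1) : del t t (om0 t) = 1 := by
  have hinv : t⁻¹ = t := inv_eq_of_mul_eq_one_right h2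
  unfold del
  rw [sec_om0, mul_one, hinv]
  unfold eps tau
  have hmk : ((t : Q) : Q ⧸ T t) = om0 t := by
    have : ((t : Q) : Q ⧸ T t) = ((1:Q) : Q ⧸ T t) := by
      rw [QuotientGroup.eq]
      rw [hinv, mul_one]
      exact Subgroup.mem_zpowers _
    exact this
  rw [hmk, sec_om0, inv_one, one_mul]
  simp [hne]

lemma smul_om0 (h2 : t * t = 1) : t⁻¹ • om0 t = om0 t := by
  have hinv : t⁻¹ = t := inv_eq_of_mul_eq_one_right h2
  have h0 : t⁻¹ • om0 t = ((t⁻¹ * 1 : Q) : Q ⧸ T t) := rfl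
  rw [h0, mul_one]
  show ((t⁻¹ : Q) : Q ⧸ T t) = ((1 : Q) : Q ⧸ T t)
  rw [QuotientGroup.eq]
  rw [inv_inv, mul_one]
  exact Subgroup.mem_zpowers _

/-! ### The extension group `X` -/

def r2 : ZMod 4 →+* ZMod 2 := ZMod.castHom (show 2 ∣ 4 by norm_num) (ZMod 2)

abbrev MOm (t : Q) := Multiplicative (Om t → ZMod 4)

def actE (q : Q) : MOm t ≃* MOm t where
  toFun f := Multiplicative.ofAdd fun ω => Multiplicative.toAdd f (q⁻¹ • ω)
  invFun f := Multiplicative.ofAdd fun ω => Multiplicative.toAdd f (q • ω)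
  left_inv f := by
    show Multiplicative.ofAdd (fun ω => Multiplicative.toAdd f (q⁻¹ • q • ω)) = f
    simp [inv_smul_smul]
  right_inv f := by
    show Multiplicative.ofAdd (fun ω => Multiplicative.toAdd f (q • q⁻¹ • ω)) = f
    simp [smul_inv_smul]
  map_mul' f g := rfl

def act : Q →* MulAut (MOm t) where
  toFun := actE t
  map_one' := by
    apply MulEquiv.ext; intro f
    show Multiplicative.ofAdd (fun ω => Multiplicative.toAdd f ((1:Q)⁻¹ • ω)) = f
    simp
  map_mul' q₁ q₂ := by
    apply MulEquiv.ext; intro f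
    show Multiplicative.ofAdd (fun ω => Multiplicative.toAdd f ((q₁*q₂)⁻¹ • ω))
        = Multiplicative.ofAdd (fun ω => Multiplicative.toAdd
            (Multiplicative.ofAdd fun ω' => Multiplicative.toAdd f (q₂⁻¹ • ω')) (q₁⁻¹ • ω))
    simp only [mul_inv_rev, mul_smul, ofAdd_toAdd, toAdd_ofAdd]

abbrev S (t : Q) := (MOm t) ⋊[act t] Q

def XSub (h2 : t * t = 1) (hne : t ≠ 1) : Subgroup (S t) where
  carrier := {p | ∀ ω, r2 (Multiplicative.toAdd p.left ω) = del t p.right ω}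
  mul_mem' := by
    intro p q hp hq ω
    rw [SemidirectProduct.mul_left, SemidirectProduct.mul_right]
    show r2 (Multiplicative.toAdd (p.left * (act t p.right) q.left) ω) = _
    have : Multiplicative.toAdd (p.left * (act t p.right) q.left) ω
        = Multiplicative.toAdd p.left ω + Multiplicative.toAdd q.left (p.right⁻¹ • ω) := rfl
    rw [this, map_add, hp ω, hq _, del_cocycle t h2 hne]
  one_mem' := by
    intro ω
    show r2 (Multiplicative.toAdd (1 : MOm t) ω) = del t (1 : S t).right ω
    rw [show (1 : S t).right = 1 from rfl, del_one]
    show r2 0 = 0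
    exact map_zero _
  inv_mem' := by
    intro p hp ω
    rw [SemidirectProduct.inv_left, SemidirectProduct.inv_right]
    have : Multiplicative.toAdd ((act t p.right⁻¹) p.left⁻¹) ω
        = - Multiplicative.toAdd p.left (p.right • ω) := by
      show Multiplicative.toAdd p.left⁻¹ ((p.right⁻¹)⁻¹ • ω) = _
      rw [inv_inv]; rfl
    rw [this, map_neg, hp _]
    have hz : ∀ x : ZMod 2, -x = x := by decide
    rw [hz]
    have hc := del_cocycle t h2 hne p.right⁻¹ p.right ω
    rw [inv_mul_cancel, del_one, inv_inv] at hc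
    have h' := congrArg (fun z => z - del t p.right (p.right • ω)) hc
    simp only [zero_sub, add_sub_cancel_right] at h'
    rw [← h', hz]

abbrev X (h2 : t * t = 1) (hne : t ≠ 1) : Type := ↥(XSub t h2 hne)

variable (h2 : t * t = 1) (hne : t ≠ 1)

def piX : X t h2 hne →* Q :=
  SemidirectProduct.rightHom.comp (XSub t h2 hne).subtype

lemma no_invol (y : X t h2 hne) (hy : (y : S t).right = t) : y * y ≠ 1 := by
  intro hsq
  have h1 : (y : S t) * (y : S t) = 1 := by
    have := congrArg (Subtype.val) hsq
    exact this
  have hleft : ((y : S t) * (y : S t)).left = (1 : S t).left := congrArg _ h1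
  rw [SemidirectProduct.mul_left, SemidirectProduct.one_left] at hleft
  have ha : Multiplicative.toAdd ((y : S t).left * (act t (y : S t).right) (y : S t).left) (om0 t)
      = Multiplicative.toAdd (y : S t).left (om0 t)
        + Multiplicative.toAdd (y : S t).left ((y : S t).right⁻¹ • om0 t) := rfl
  set a := Multiplicative.toAdd (y : S t).left (om0 t) with hadef
  have hfix : (y : S t).right⁻¹ • om0 t = om0 t := by rw [hy]; exact smul_om0 t h2
  have haa : a + a = 0 := by
    have h3 := congrArg (fun f : MOm t => Multiplicative.toAdd f (om0 t)) hleft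
    have h4 : Multiplicative.toAdd ((y : S t).left * (act t (y : S t).right) (y : S t).left) (om0 t)
        = (0 : ZMod 4) := h3
    rw [ha, hfix] at h4
    exact h4
  have hr2 : r2 a = 1 := by
    have := y.2 (om0 t)
    rw [hadef, this, hy, del_t_om0 t h2 hne]
  have hcases : ∀ b : ZMod 4, b + b = 0 → b = 0 ∨ b = 2 := by decide
  rcases hcases a haa with h | h
  · rw [h, map_zero] at hr2
    exact (by decide : (0 : ZMod 2) ≠ 1) hr2
  · rw [h] at hr2
    have h22 : r2 (2 : ZMod 4) = 0 := by
      have : (2 : ZMod 4) = 1 + 1 := by decide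
      rw [this, map_add, map_one]
      decide
    rw [h22] at hr2
    exact (by decide : (0 : ZMod 2) ≠ 1) hr2



/-! ### Lifting homomorphisms into `X` -/

section Lift

variable {G' : Type} [Group G'] (f₁ : G' →* Q)

lemma val_unique (h2 : t * t = 1) (hA : ∀ (u : Q) (g : G'), u * f₁ g * u⁻¹ ≠ t)
    (g g' : G') (ω : Om t) (h : f₁ g • ω = f₁ g' • ω) : f₁ g = f₁ g' := by
  obtain ⟨u, rfl⟩ : ∃ u : Q, ((u : Q) : Q ⧸ T t) = ω := ⟨ω.out, QuotientGroup.out_eq' ω⟩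
  have h' : ((f₁ g * u : Q) : Q ⧸ T t) = ((f₁ g' * u : Q) : Q ⧸ T t) := by
    rw [← smul_mk_eq, ← smul_mk_eq]; exact h
  rw [QuotientGroup.eq] at h'
  rcases (mem_T_iff t h2 _).mp h' with h1 | h1
  · have h3 : f₁ g * u = f₁ g' * u := by
      have := inv_mul_eq_one.mp h1
      exact this
    exact mul_right_cancel h3
  · exfalso
    apply hA u⁻¹ (g⁻¹ * g')
    rw [map_mul, map_inv, inv_inv]
    rw [← h1]
    group

def orbS : Setoid (Om t) where
  r ω ω' := ∃ g : G', f₁ g • ω = ω'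
  iseqv := by
    constructor
    · intro ω; exact ⟨1, by rw [map_one, one_smul]⟩
    · rintro ω ω' ⟨g, hg⟩
      exact ⟨g⁻¹, by rw [← hg, map_inv, inv_smul_smul]⟩
    · rintro ω ω' ω'' ⟨g, hg⟩ ⟨g', hg'⟩
      exact ⟨g' * g, by rw [map_mul, mul_smul, hg, hg']⟩

def rep (ω : Om t) : Om t := (@Quotient.mk _ (orbS t f₁) ω).out

lemma rep_spec (ω : Om t) : ∃ g : G', f₁ g • rep t f₁ ω = ω :=
  @Quotient.mk_out _ (orbS t f₁) ω

lemma rep_inv (g : G') (ω : Om t) : rep t f₁ (f₁ g • ω) = rep t f₁ ω := by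
  unfold rep
  congr 1
  exact Quotient.sound ⟨g⁻¹, by rw [map_inv, inv_smul_smul]⟩

def gsel (ω : Om t) : G' := (rep_spec t f₁ ω).choose

lemma gsel_spec (ω : Om t) : f₁ (gsel t f₁ ω) • rep t f₁ ω = ω :=
  (rep_spec t f₁ ω).choose_spec

def hbar (ω : Om t) : ZMod 2 := del t (f₁ (gsel t f₁ ω)) ω

lemma hbar_key (h2 : t * t = 1) (hne : t ≠ 1)
    (hA : ∀ (u : Q) (g : G'), u * f₁ g * u⁻¹ ≠ t) (g : G') (ω : Om t) :
    del t (f₁ g) ω = hbar t f₁ ((f₁ g)⁻¹ • ω) + hbar t f₁ ω := by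
  set ω'' := (f₁ g)⁻¹ • ω with hw
  have hrep : rep t f₁ ω'' = rep t f₁ ω := by
    have hx : ω = f₁ g • ω'' := by rw [hw, smul_inv_smul]
    conv_rhs => rw [hx]
    rw [rep_inv]
  have ha := gsel_spec t f₁ ω
  have ha' := gsel_spec t f₁ ω''
  rw [hrep] at ha'
  have hcomp : f₁ (g⁻¹ * gsel t f₁ ω) • rep t f₁ ω = ω'' := by
    rw [map_mul, mul_smul, ha, map_inv]
  have hval : f₁ (gsel t f₁ ω'') = f₁ (g⁻¹ * gsel t f₁ ω) :=
    val_unique t f₁ h2 hA _ _ _ (ha'.trans hcomp.symm)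
  have hco := del_cocycle t h2 hne (f₁ g) (f₁ (g⁻¹ * gsel t f₁ ω)) ω
  rw [← map_mul] at hco
  have hg : g * (g⁻¹ * gsel t f₁ ω) = gsel t f₁ ω := by group
  rw [hg] at hco
  show del t (f₁ g) ω = del t (f₁ (gsel t f₁ ω'')) ω'' + del t (f₁ (gsel t f₁ ω)) ω
  rw [hval, hco, ← hw]
  have hz : ∀ x : ZMod 2, x + x = 0 := by decide
  have : del t (f₁ (g⁻¹ * gsel t f₁ ω)) ω''
        + (del t (f₁ g) ω + del t (f₁ (g⁻¹ * gsel t f₁ ω)) ω'')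
      = del t (f₁ g) ω
        + (del t (f₁ (g⁻¹ * gsel t f₁ ω)) ω'' + del t (f₁ (g⁻¹ * gsel t f₁ ω)) ω'') := by
    ring
  rw [this, hz, add_zero]

def h4 (ω : Om t) : ZMod 4 := ((hbar t f₁ ω).val : ZMod 4)

lemma r2_h4 (ω : Om t) : r2 (h4 t f₁ ω) = hbar t f₁ ω := by
  unfold h4
  have hall : ∀ b : ZMod 2, b = 0 ∨ b = 1 := by decide
  rcases hall (hbar t f₁ ω) with h | h <;> rw [h]
  · show r2 ((ZMod.val (0 : ZMod 2) : ZMod 4)) = 0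
    rw [ZMod.val_zero]
    show r2 ((0 : ℕ) : ZMod 4) = 0
    rw [Nat.cast_zero, map_zero]
  · show r2 ((ZMod.val (1 : ZMod 2) : ZMod 4)) = 1
    rw [ZMod.val_one]
    show r2 ((1 : ℕ) : ZMod 4) = 1
    rw [Nat.cast_one, map_one]

variable (h2 : t * t = 1) (hne : t ≠ 1)
variable (hA : ∀ (u : Q) (g : G'), u * f₁ g * u⁻¹ ≠ t)

def liftX : G' →* X t h2 hne where
  toFun g := ⟨⟨Multiplicative.ofAdd
      (fun ω => h4 t f₁ ((f₁ g)⁻¹ • ω) - h4 t f₁ ω), f₁ g⟩, by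
    intro ω
    show r2 (h4 t f₁ ((f₁ g)⁻¹ • ω) - h4 t f₁ ω) = del t (f₁ g) ω
    rw [map_sub, r2_h4, r2_h4]
    have hsub : ∀ x y : ZMod 2, x - y = x + y := by decide
    rw [hsub]
    exact (hbar_key t f₁ h2 hne hA g ω).symm⟩
  map_one' := by
    apply Subtype.ext
    apply SemidirectProduct.ext
    · show Multiplicative.ofAdd (fun ω => h4 t f₁ ((f₁ 1)⁻¹ • ω) - h4 t f₁ ω)
        = (1 : MOm t)
      have : (fun ω => h4 t f₁ ((f₁ (1:G'))⁻¹ • ω) - h4 t f₁ ω) = (0 : Om t → ZMod 4) := by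
        funext ω
        rw [map_one, inv_one, one_smul, sub_self]
        rfl
      rw [this]
      rfl
    · exact map_one f₁
  map_mul' g g' := by
    apply Subtype.ext
    apply SemidirectProduct.ext
    · show Multiplicative.ofAdd (fun ω => h4 t f₁ ((f₁ (g*g'))⁻¹ • ω) - h4 t f₁ ω)
        = Multiplicative.ofAdd (fun ω => h4 t f₁ ((f₁ g)⁻¹ • ω) - h4 t f₁ ω)
          * (act t (f₁ g)) (Multiplicative.ofAdd (fun ω => h4 t f₁ ((f₁ g')⁻¹ • ω) - h4 t f₁ ω))
      have : (fun ω => h4 t f₁ ((f₁ (g*g'))⁻¹ • ω) - h4 t f₁ ω)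
          = (fun ω => h4 t f₁ ((f₁ g)⁻¹ • ω) - h4 t f₁ ω)
            + (fun ω => (h4 t f₁ ((f₁ g')⁻¹ • ((f₁ g)⁻¹ • ω)) - h4 t f₁ ((f₁ g)⁻¹ • ω))) := by
        funext ω
        show h4 t f₁ ((f₁ (g*g'))⁻¹ • ω) - h4 t f₁ ω
          = (h4 t f₁ ((f₁ g)⁻¹ • ω) - h4 t f₁ ω)
            + (h4 t f₁ ((f₁ g')⁻¹ • ((f₁ g)⁻¹ • ω)) - h4 t f₁ ((f₁ g)⁻¹ • ω))
        rw [map_mul, mul_inv_rev, mul_smul]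
        ring
      rw [this]
      rfl
    · exact map_mul f₁ g g'

lemma liftX_right (g : G') : ((liftX t f₁ h2 hne hA g : X t h2 hne) : S t).right = f₁ g := rfl

lemma liftX_congr (g g' : G') (h : f₁ g = f₁ g') :
    liftX t f₁ h2 hne hA g = liftX t f₁ h2 hne hA g' := by
  apply Subtype.ext
  apply SemidirectProduct.ext
  · show Multiplicative.ofAdd (fun ω => h4 t f₁ ((f₁ g)⁻¹ • ω) - h4 t f₁ ω)
      = Multiplicative.ofAdd (fun ω => h4 t f₁ ((f₁ g')⁻¹ • ω) - h4 t f₁ ω)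
    rw [h]
  · exact h

end Lift

end Stmt11

/-- `F` together with `ι₁ : G → F`, `ι₂ : E → F` is the free profinite product (coproduct)
of the profinite groups `G` and `E`. -/
def IsProfiniteCoprod (G E F : Type) [Group G] [TopologicalSpace G] [Group E]
    [TopologicalSpace E] [Group F] [TopologicalSpace F]
    (ι₁ : G →* F) (ι₂ : E →* F) : Prop :=
  Continuous ι₁ ∧ Continuous ι₂ ∧
    ∀ (H : Type) [Group H] [TopologicalSpace H] [IsTopologicalGroup H] [CompactSpace H]
      [T2Space H] [TotallyDisconnectedSpace H] (f : G →* H) (g : E →* H),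
      Continuous f → Continuous g →
        ∃! h : F →* H, Continuous h ∧ h.comp ι₁ = f ∧ h.comp ι₂ = g

/-- Herfort–Ribes, special case: if `G` is a profinite group whose torsion
consists only of involutions and `E` is a torsion-free profinite group, then every
involution of the free profinite product `G ⋆ E` is conjugate to an involution lying
in `G` or in `E`. -/
theorem stmt_11 (G E F : Type)
    [Group G] [TopologicalSpace G] [IsTopologicalGroup G] [CompactSpace G] [T2Space G]
    [TotallyDisconnectedSpace G]
    [Group E] [TopologicalSpace E] [IsTopologicalGroup E] [CompactSpace E] [T2Space E]
    [TotallyDisconnectedSpace E]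
    [Group F] [TopologicalSpace F] [IsTopologicalGroup F] [CompactSpace F] [T2Space F]
    [TotallyDisconnectedSpace F]
    (ι₁ : G →* F) (ι₂ : E →* F) (hco : IsProfiniteCoprod G E F ι₁ ι₂)
    (hG : ∀ x : G, IsOfFinOrder x → x ≠ 1 → x * x = 1)
    (hE : ∀ y : E, IsOfFinOrder y → y = 1) :
    ∀ x : F, x * x = 1 → x ≠ 1 →
      ∃ z : F, (∃ g : G, g * g = 1 ∧ z * x * z⁻¹ = ι₁ g) ∨
        (∃ e : E, e * e = 1 ∧ z * x * z⁻¹ = ι₂ e) := by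
  obtain ⟨h1c, h2c, hump⟩ := hco
  intro x hx2 hxne
  -- retraction onto G
  obtain ⟨φ, ⟨φc, φ1, φ2⟩, -⟩ := hump G (MonoidHom.id G) 1 continuous_id
    (show Continuous (fun _ : E => (1:G)) from continuous_const)
  -- retraction onto E
  obtain ⟨ψ, ⟨ψc, ψ1, ψ2⟩, -⟩ := hump E 1 (MonoidHom.id E)
    (show Continuous (fun _ : G => (1:E)) from continuous_const) continuous_id
  classical
  set K : Set F := Set.range ι₁ ∪ Set.range ι₂ with hK
  set C : Set F := (fun p : F × F => p.1⁻¹ * p.2 * p.1) '' (Set.univ ×ˢ K) with hC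
  have hKcomp : IsCompact K := (isCompact_range h1c).union (isCompact_range h2c)
  have hCcomp : IsCompact C := by
    exact (isCompact_univ.prod hKcomp).image
      ((continuous_fst.inv.mul continuous_snd).mul continuous_fst)
  by_cases hxC : x ∈ C
  · obtain ⟨⟨z, w⟩, hmem, hzw⟩ := hxC
    have hwK : w ∈ K := hmem.2
    have hw : z * x * z⁻¹ = w := by rw [← hzw]; group
    have hww : w * w = 1 := by
      rw [← hw]
      have : z * x * z⁻¹ * (z * x * z⁻¹) = z * (x * x) * z⁻¹ := by group
      rw [this, hx2, mul_one, mul_inv_cancel]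
    refine ⟨z, ?_⟩
    rcases hwK with ⟨g, hg⟩ | ⟨e, he⟩
    · left
      refine ⟨g, ?_, by rw [hw, ← hg]⟩
      have hι : ι₁ (g * g) = 1 := by rw [map_mul, hg, hww]
      have := congrArg φ hι
      rw [map_one] at this
      have hφι : ∀ a : G, φ (ι₁ a) = a := fun a => DFunLike.congr_fun φ1 a
      rw [hφι] at this
      exact this
    · right
      refine ⟨e, ?_, by rw [hw, ← he]⟩
      have hι : ι₂ (e * e) = 1 := by rw [map_mul, he, hww]
      have := congrArg ψ hι
      rw [map_one] at this
      have hψι : ∀ a : E, ψ (ι₂ a) = a := fun a => DFunLike.congr_fun ψ2 a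
      rw [hψι] at this
      exact this
  · exfalso
    -- separate x from C by an open normal subgroup
    set D : Set F := (fun c => c⁻¹ * x) '' C with hD
    have hDcomp : IsCompact D := hCcomp.image (continuous_inv.mul continuous_const)
    have hDclosed : IsClosed D := hDcomp.isClosed
    have h1D : (1 : F) ∉ D := by
      rintro ⟨c, hc, h1⟩
      apply hxC
      have : c = x := by
        have := congrArg (fun y => c * y) h1
        simpa [mul_assoc] using this.symm
      rwa [← this]
    obtain ⟨V, hVclopen, h1V, hVD⟩ :=
      compact_exists_isClopen_in_isOpen hDclosed.isOpen_compl h1D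
    obtain ⟨N, hNV⟩ :=
      IsTopologicalGroup.exist_openNormalSubgroup_sub_clopen_nhds_of_one hVclopen h1V
    set U : Subgroup F := N.toSubgroup with hU
    haveI hUnormal : U.Normal := N.isNormal'
    set Q := F ⧸ U with hQdef
    set qhom : F →* Q := QuotientGroup.mk' U with hqhom
    have hqcont : Continuous qhom := QuotientGroup.continuous_mk
    -- Q is finite discrete profinite
    haveI hdisc : DiscreteTopology Q := by
      rw [discreteTopology_iff_isOpen_singleton]
      intro q
      obtain ⟨y, rfl⟩ := QuotientGroup.mk'_surjective U q
      have : QuotientGroup.mk ⁻¹' ({QuotientGroup.mk' U y} : Set Q)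
          = (fun z => z⁻¹ * y) ⁻¹' (U : Set F) := by
        ext z
        simp only [Set.mem_preimage, Set.mem_singleton_iff]
        exact QuotientGroup.eq
      rw [← (QuotientGroup.isQuotientMap_mk U).isOpen_preimage, this]
      exact (N.isOpen').preimage (continuous_inv.mul continuous_const)
    haveI hQfin : Finite Q := finite_of_compact_of_discrete
    set t : Q := qhom x with htdef
    have ht2 : t * t = 1 := by rw [htdef, ← map_mul, hx2, map_one]
    set f₁ : G →* Q := qhom.comp ι₁ with hf₁
    set f₂ : E →* Q := qhom.comp ι₂ with hf₂
    have hmemC : ∀ (z w : F), w ∈ K → z * w * z⁻¹ ∈ C := by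
      intro z w hw
      exact ⟨(z⁻¹, w), ⟨trivial, hw⟩, by group⟩
    have hUD : ∀ c ∈ C, c⁻¹ * x ∉ U := by
      intro c hc hmem
      exact (hVD (hNV hmem)) ⟨c, hc, rfl⟩
    have hA : ∀ (u : Q) (g : G), u * f₁ g * u⁻¹ ≠ t := by
      intro u g heq
      obtain ⟨z, rfl⟩ := QuotientGroup.mk'_surjective U u
      have h1 : qhom (z * ι₁ g * z⁻¹) = qhom x := by
        rw [map_mul, map_mul, map_inv]
        exact heq
      have h2 : (z * ι₁ g * z⁻¹)⁻¹ * x ∈ U := QuotientGroup.eq.mp h1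
      exact hUD _ (hmemC z (ι₁ g) (Or.inl ⟨g, rfl⟩)) h2
    have hB : ∀ (u : Q) (e : E), u * f₂ e * u⁻¹ ≠ t := by
      intro u e heq
      obtain ⟨z, rfl⟩ := QuotientGroup.mk'_surjective U u
      have h1 : qhom (z * ι₂ e * z⁻¹) = qhom x := by
        rw [map_mul, map_mul, map_inv]
        exact heq
      have h2 : (z * ι₂ e * z⁻¹)⁻¹ * x ∈ U := QuotientGroup.eq.mp h1
      exact hUD _ (hmemC z (ι₂ e) (Or.inr ⟨e, rfl⟩)) h2
    have htne : t ≠ 1 := by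
      intro h1
      apply hA 1 1
      rw [map_one, h1]
      group
    -- the finite group X with its (discrete) profinite structure
    letI instTX : TopologicalSpace (Stmt11.X t ht2 htne) := ⊥
    haveI hdX : DiscreteTopology (Stmt11.X t ht2 htne) := ⟨rfl⟩
    haveI : IsTopologicalGroup (Stmt11.X t ht2 htne) :=
      { continuous_mul := continuous_of_discreteTopology
        continuous_inv := continuous_of_discreteTopology }
    haveI hSfin : Finite (Stmt11.S t) := by
      have e : Stmt11.S t ≃ (Stmt11.MOm t) × Q :=
        ⟨fun p => (p.left, p.right), fun q => ⟨q.1, q.2⟩, fun p => rfl, fun q => rfl⟩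
      exact Finite.of_equiv _ e.symm
    haveI hXfin : Finite (Stmt11.X t ht2 htne) := Subtype.finite
    haveI : CompactSpace (Stmt11.X t ht2 htne) := Finite.compactSpace
    -- the lifted homomorphisms
    set FG := Stmt11.liftX t f₁ ht2 htne hA with hFG
    set FE := Stmt11.liftX t f₂ ht2 htne hB with hFE
    have hf₁c : Continuous f₁ := hqcont.comp h1c
    have hf₂c : Continuous f₂ := hqcont.comp h2c
    have hFGc : Continuous FG := by
      set Ψ : Q → Stmt11.X t ht2 htne := fun q' =>
        if h : ∃ g, f₁ g = q' then FG h.choose else 1 with hΨ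
      have hfac : ∀ g, Ψ (f₁ g) = FG g := by
        intro g
        have hex : ∃ g0, f₁ g0 = f₁ g := ⟨g, rfl⟩
        rw [hΨ]
        simp only [dif_pos hex]
        exact Stmt11.liftX_congr t f₁ ht2 htne hA _ _ hex.choose_spec
      exact ((continuous_of_discreteTopology (f := Ψ)).comp hf₁c).congr
        (fun g => hfac g)
    have hFEc : Continuous FE := by
      set Ψ : Q → Stmt11.X t ht2 htne := fun q' =>
        if h : ∃ e, f₂ e = q' then FE h.choose else 1 with hΨ
      have hfac : ∀ e, Ψ (f₂ e) = FE e := by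
        intro e
        have hex : ∃ e0, f₂ e0 = f₂ e := ⟨e, rfl⟩
        rw [hΨ]
        simp only [dif_pos hex]
        exact Stmt11.liftX_congr t f₂ ht2 htne hB _ _ hex.choose_spec
      exact ((continuous_of_discreteTopology (f := Ψ)).comp hf₂c).congr
        (fun e => hfac e)
    obtain ⟨hX, ⟨hXc, hX1, hX2⟩, -⟩ := hump (Stmt11.X t ht2 htne) FG FE hFGc hFEc
    obtain ⟨hQ0, hQprop, hQuniq⟩ := hump Q f₁ f₂ hf₁c hf₂c
    have e1 : qhom = hQ0 := hQuniq qhom ⟨hqcont, rfl, rfl⟩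
    have hπc : Continuous (Stmt11.piX t ht2 htne) := continuous_of_discreteTopology
    have e2 : (Stmt11.piX t ht2 htne).comp hX = hQ0 := by
      apply hQuniq
      refine ⟨hπc.comp hXc, ?_, ?_⟩
      · rw [MonoidHom.comp_assoc, hX1]
        ext g
        rfl
      · rw [MonoidHom.comp_assoc, hX2]
        ext e
        rfl
    have hqx : ((hX x : Stmt11.X t ht2 htne) : Stmt11.S t).right = t := by
      have h3 : qhom x = (Stmt11.piX t ht2 htne) (hX x) := by
        rw [e1, ← e2]
        rfl
      exact h3.symm
    apply Stmt11.no_invol t ht2 htne (hX x) hqx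
    rw [← map_mul, hx2, map_one]
end
end

section
/- Let G be a profinite group with an open subgroup G' of index at most 2 that is torsion-free, and let E be a torsion-free profinite group. Let φ : G ⋆ E → Z/2Z be the homomorphism determined by E → {1} and the quotient G → G/G', and let G'_⋆ = ker(φ). Then G'_⋆ contains no involutions; in particular, the set of involutions Inv(G ⋆ E) is closed in G ⋆ E. -/
namespace Stmt12Aux

/-- reduction mod 2 on `ZMod 4`, as a computable function. -/
def r42 : ZMod 4 → ZMod 2 := fun v => (v.val : ZMod 2)

/-- a set-theoretic section of `r42`. -/
def l24 : ZMod 2 → ZMod 4 := fun b => if b = 0 then 0 else 1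

lemma r42_add : ∀ a b : ZMod 4, r42 (a + b) = r42 a + r42 b := by decide
lemma r42_sub : ∀ a b : ZMod 4, r42 (a - b) = r42 a + r42 b := by decide
lemma r42_neg : ∀ a : ZMod 4, r42 (-a) = r42 a := by decide
lemma r42_l24 : ∀ b : ZMod 2, r42 (l24 b) = b := by decide
lemma r42_zero : r42 0 = 0 := by decide
lemma add_self_ne_zero_of_r42 : ∀ a : ZMod 4, r42 a = 1 → a + a ≠ 0 := by decide
lemma zmod2_add_self : ∀ a : ZMod 2, a + a = 0 := by decide

variable {P : Type} [Group P]

/-- the "crossing cocycle" valued in `ZMod 2 ≅ ⟨c⟩`, measuring how `p` moves the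
coset `x` relative to the chosen (`Quotient.out`) transversal of `P ⧸ ⟨c⟩`. -/
noncomputable def alph (c : P) (x : P ⧸ Subgroup.zpowers c) (p : P) : ZMod 2 :=
  @ite _ ((p⁻¹ • x).out⁻¹ * (p⁻¹ * x.out) = 1) (Classical.dec _) 0 1

lemma d_mem (c : P) (x : P ⧸ Subgroup.zpowers c) (p : P) :
    (p⁻¹ • x).out⁻¹ * (p⁻¹ * x.out) ∈ Subgroup.zpowers c := by
  rw [← QuotientGroup.eq, QuotientGroup.out_eq']
  conv_lhs => rw [← QuotientGroup.out_eq' x]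
  rfl

lemma zpowers_cases {c a : P} (hc2 : c * c = 1) (ha : a ∈ Subgroup.zpowers c) :
    a = 1 ∨ a = c := by
  obtain ⟨k, rfl⟩ := Subgroup.mem_zpowers_iff.mp ha
  have h2 : c ^ (2 : ℤ) = 1 := by
    rw [show (2:ℤ) = ((2:ℕ):ℤ) by norm_num, zpow_natCast, pow_two, hc2]
  rcases Int.even_or_odd k with ⟨m, hm⟩ | ⟨m, hm⟩
  · left
    rw [hm, show m + m = 2 * m by ring, zpow_mul, h2, one_zpow]
  · right
    rw [hm, zpow_add, zpow_mul, h2, one_zpow, one_mul, zpow_one]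

lemma alph_eq_zero_iff {c : P} (hc2 : c * c = 1) (hc1 : c ≠ 1)
    (x : P ⧸ Subgroup.zpowers c) (p : P) :
    alph c x p = 0 ↔ (p⁻¹ • x).out⁻¹ * (p⁻¹ * x.out) = 1 := by
  unfold alph
  split <;> simp_all

/-- `alph` is a cocycle. -/
lemma alph_cocycle {c : P} (hc2 : c * c = 1) (hc1 : c ≠ 1)
    (x : P ⧸ Subgroup.zpowers c) (p p' : P) :
    alph c x (p * p') = alph c x p + alph c (p⁻¹ • x) p' := by
  have key : ((p * p')⁻¹ • x).out⁻¹ * ((p * p')⁻¹ * x.out)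
      = ((p'⁻¹ • (p⁻¹ • x)).out⁻¹ * (p'⁻¹ * (p⁻¹ • x).out))
        * ((p⁻¹ • x).out⁻¹ * (p⁻¹ * x.out)) := by
    have hxx : (p * p')⁻¹ • x = p'⁻¹ • (p⁻¹ • x) := by
      rw [smul_smul, ← mul_inv_rev]
    rw [hxx]; group
  have h1 := d_mem c x p
  have h2 := d_mem c (p⁻¹ • x) p'
  -- ε is "multiplicative" on {1, c}
  rcases zpowers_cases hc2 h1 with e1 | e1 <;> rcases zpowers_cases hc2 h2 with e2 | e2 <;>
    · unfold alph
      rw [key, e1, e2]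
      simp [hc1, hc2, mul_one, one_mul]
      try decide

lemma alph_one {c : P} (x : P ⧸ Subgroup.zpowers c) : alph c x 1 = 0 := by
  unfold alph
  rw [if_pos]
  rw [inv_one, one_smul, one_mul, inv_mul_cancel]

lemma alph_inv {c : P} (hc2 : c * c = 1) (hc1 : c ≠ 1)
    (x : P ⧸ Subgroup.zpowers c) (p : P) :
    alph c x p⁻¹ = alph c (p • x) p := by
  have h := alph_cocycle hc2 hc1 (p • x) p p⁻¹
  rw [mul_inv_cancel, alph_one, inv_smul_smul] at h
  -- h : 0 = alph c (p⁻¹ • x) p + alph c x p⁻¹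
  have h2 : alph c (p • x) p + (alph c (p • x) p + alph c x p⁻¹)
      = alph c (p • x) p := by rw [← h, add_zero]
  rw [← add_assoc, zmod2_add_self, zero_add] at h2
  exact h2

/-- The gadget: an extension of `P` by `Map(P ⧸ ⟨c⟩, ℤ/2)` in which every preimage
of `c` has order 4. -/
@[ext]
structure Gd (c : P) (hc2 : c * c = 1) (hc1 : c ≠ 1) where
  f : (P ⧸ Subgroup.zpowers c) → ZMod 4
  p : P
  compat : ∀ x, r42 (f x) = alph c x p

namespace Gd

variable {c : P} {hc2 : c * c = 1} {hc1 : c ≠ 1}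

instance : Mul (Gd c hc2 hc1) :=
  ⟨fun z w => ⟨fun x => z.f x + w.f (z.p⁻¹ • x), z.p * w.p, fun x => by
    rw [r42_add, z.compat, w.compat, alph_cocycle hc2 hc1]⟩⟩

instance : One (Gd c hc2 hc1) :=
  ⟨⟨fun _ => 0, 1, fun x => by rw [alph_one]; rfl⟩⟩

instance : Inv (Gd c hc2 hc1) :=
  ⟨fun z => ⟨fun x => - z.f (z.p • x), z.p⁻¹, fun x => by
    rw [r42_neg, z.compat, alph_inv hc2 hc1]⟩⟩

@[simp] lemma mul_p (z w : Gd c hc2 hc1) : (z * w).p = z.p * w.p := rfl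
@[simp] lemma mul_f (z w : Gd c hc2 hc1) (x) : (z * w).f x = z.f x + w.f (z.p⁻¹ • x) := rfl
@[simp] lemma one_p : (1 : Gd c hc2 hc1).p = 1 := rfl
@[simp] lemma one_f (x) : (1 : Gd c hc2 hc1).f x = 0 := rfl
@[simp] lemma inv_p (z : Gd c hc2 hc1) : (z⁻¹).p = z.p⁻¹ := rfl
@[simp] lemma inv_f (z : Gd c hc2 hc1) (x) : (z⁻¹).f x = - z.f (z.p • x) := rfl

instance : Group (Gd c hc2 hc1) where
  mul_assoc a b d := by
    ext x
    · simp only [mul_f, mul_p, mul_inv_rev, mul_smul, add_assoc]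
    · simp only [mul_p, mul_assoc]
  one_mul a := by
    ext x
    · simp only [mul_f, one_f, one_p, inv_one, one_smul, zero_add]
    · simp only [mul_p, one_p, one_mul]
  mul_one a := by
    ext x
    · simp only [mul_f, one_f, add_zero]
    · simp only [mul_p, one_p, mul_one]
  inv_mul_cancel a := by
    ext x
    · simp only [mul_f, inv_f, inv_p, one_f, inv_inv, smul_smul, mul_inv_cancel, one_smul,
        neg_add_cancel]
    · simp only [mul_p, inv_p, one_p, inv_mul_cancel]

/-- the projection onto `P`. -/
def proj : Gd c hc2 hc1 →* P where
  toFun z := z.p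
  map_one' := rfl
  map_mul' _ _ := rfl

lemma proj_surjective : Function.Surjective (proj : Gd c hc2 hc1 →* P) := by
  intro p
  exact ⟨⟨fun x => l24 (alph c x p), p, fun x => r42_l24 _⟩, rfl⟩

lemma smul_one_fixed : c⁻¹ • ((1 : P) : P ⧸ Subgroup.zpowers c) = ((1 : P) : P ⧸ Subgroup.zpowers c) := by
  show ((c⁻¹ * 1 : P) : P ⧸ Subgroup.zpowers c) = _
  rw [QuotientGroup.eq]
  simpa using Subgroup.mem_zpowers c

lemma alph_one_c (hc1 : c ≠ 1) : alph c ((1 : P) : P ⧸ Subgroup.zpowers c) c = 1 := by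
  set x : P ⧸ Subgroup.zpowers c := ((1 : P) : P ⧸ Subgroup.zpowers c) with hxdef
  have hfalse : ¬ ((c⁻¹ • x).out⁻¹ * (c⁻¹ * x.out) = 1) := by
    intro h
    rw [smul_one_fixed] at h
    have h2 : c⁻¹ * x.out = x.out := by
      calc c⁻¹ * x.out = x.out * (x.out⁻¹ * (c⁻¹ * x.out)) := by group
      _ = x.out := by rw [show x.out⁻¹ * (c⁻¹ * x.out) = 1 from h, mul_one]
    have : c⁻¹ = 1 := mul_right_cancel (a := c⁻¹) (by rw [h2, one_mul])
    exact hc1 (by rw [← inv_inv c, this, inv_one])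
  unfold alph
  rw [if_neg hfalse]

/-- every preimage of `c` in the gadget squares to a nontrivial element. -/
lemma sq_ne_one_of_proj_eq (z : Gd c hc2 hc1) (hz : z.p = c) : z * z ≠ 1 := by
  intro h
  set x : P ⧸ Subgroup.zpowers c := ((1 : P) : P ⧸ Subgroup.zpowers c) with hxdef
  have hval : (z * z).f x = z.f x + z.f x := by
    rw [mul_f, hz, smul_one_fixed]
  have hodd : r42 (z.f x) = 1 := by
    rw [z.compat, hz]
    exact alph_one_c hc1
  rw [h, one_f] at hval
  exact add_self_ne_zero_of_r42 _ hodd hval.symm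

end Gd


section Split

variable {c : P}

local notation "X" => P ⧸ Subgroup.zpowers c

/-- if no conjugate of `c` lies in `A`, then `A` acts freely on `P ⧸ ⟨c⟩`. -/
lemma free_action (hc2 : c * c = 1) (A : Subgroup P) (hA : ∀ g : P, g * c * g⁻¹ ∉ A)
    (u : ↥A) (x : X) (h : (u : P) • x = x) : u = 1 := by
  have hx : ((↑u * x.out : P) : X) = ((x.out : P) : X) := by
    calc ((↑u * x.out : P) : X) = (u : P) • ((x.out : P) : X) := rfl
    _ = (u : P) • x := by rw [QuotientGroup.out_eq']
    _ = x := h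
    _ = ((x.out : P) : X) := (QuotientGroup.out_eq' x).symm
  rw [QuotientGroup.eq] at hx
  rcases zpowers_cases hc2 hx with h1 | h1
  · have h2 : (↑u : P)⁻¹ = x.out * ((↑u * x.out)⁻¹ * x.out) * x.out⁻¹ := by group
    rw [h1] at h2
    simp only [mul_one, mul_inv_cancel] at h2
    have h3 : (↑u : P) = 1 := by rw [← inv_inv (↑u : P), h2, inv_one]
    exact Subtype.ext h3
  · exfalso
    apply hA x.out
    have hcinv : c⁻¹ = c := inv_eq_of_mul_eq_one_right hc2
    set t : P := x.out with ht
    have h4 : (↑u : P)⁻¹ = t * c * t⁻¹ := by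
      rw [← h1]; group
    have hu : (↑u : P) = t * c * t⁻¹ := by
      calc (↑u : P) = ((↑u : P)⁻¹)⁻¹ := (inv_inv _).symm
      _ = (t * c * t⁻¹)⁻¹ := by rw [h4]
      _ = t * c⁻¹ * t⁻¹ := by group
      _ = t * c * t⁻¹ := by rw [hcinv]
    rw [← hu]
    exact u.2

lemma act_uniq (hc2 : c * c = 1) (A : Subgroup P) (hA : ∀ g : P, g * c * g⁻¹ ∉ A)
    (x : X) (u v : ↥A) (h : u • x = v • x) : u = v := by
  have hx : (↑(v⁻¹ * u) : P) • x = x := by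
    show ((v⁻¹ * u : ↥A)) • x = x
    rw [mul_smul, h, inv_smul_smul]
  exact (inv_mul_eq_one.mp (free_action hc2 A hA (v⁻¹ * u) x hx)).symm

/-- representative of the `A`-orbit of `x`. -/
noncomputable def orbRep (A : Subgroup P) (x : X) : X :=
  (Quotient.mk'' x : Quotient (MulAction.orbitRel ↥A X)).out

lemma orbRep_exists (A : Subgroup P) (x : X) : ∃ u : ↥A, u • x = orbRep A x :=
  MulAction.mem_orbit_iff.mp (Quotient.mk_out' (s₁ := MulAction.orbitRel ↥A X) x)

lemma orbRep_smul (A : Subgroup P) (u : ↥A) (x : X) : orbRep A (u • x) = orbRep A x := by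
  unfold orbRep
  congr 1
  exact Quotient.sound' (MulAction.mem_orbit x u)

/-- the unique element of `A` carrying `x` to its orbit representative. -/
noncomputable def wsel (A : Subgroup P) (x : X) : ↥A := Classical.choose (orbRep_exists A x)

lemma wsel_spec (A : Subgroup P) (x : X) : (wsel A x) • x = orbRep A x :=
  Classical.choose_spec (orbRep_exists A x)

lemma wsel_shift (hc2 : c * c = 1) (A : Subgroup P) (hA : ∀ g : P, g * c * g⁻¹ ∉ A)
    (v : ↥A) (x : X) : wsel A (v⁻¹ • x) = wsel A x * v := by
  apply act_uniq hc2 A hA (v⁻¹ • x)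
  rw [wsel_spec, mul_smul, smul_inv_smul, wsel_spec]
  exact orbRep_smul A v⁻¹ x

/-- the potential function trivializing the cocycle `alph` on `A`. -/
noncomputable def lamb (A : Subgroup P) (x : X) : ZMod 2 := alph c (orbRep A x) ↑(wsel A x)

lemma lamb_shift (hc2 : c * c = 1) (hc1 : c ≠ 1) (A : Subgroup P)
    (hA : ∀ g : P, g * c * g⁻¹ ∉ A) (v : ↥A) (x : X) :
    lamb A (v⁻¹ • x) = lamb A x + alph c x ↑v := by
  unfold lamb
  rw [wsel_shift hc2 A hA, orbRep_smul A v⁻¹ x, Subgroup.coe_mul,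
    alph_cocycle hc2 hc1]
  congr 1
  have h : ((wsel A x : P))⁻¹ • orbRep A x = x := by
    rw [inv_smul_eq_iff]
    exact (wsel_spec A x).symm
  rw [h]

/-- the explicit splitting of the gadget over `A`. -/
noncomputable def spl (hc2 : c * c = 1) (hc1 : c ≠ 1) (A : Subgroup P)
    (hA : ∀ g : P, g * c * g⁻¹ ∉ A) : ↥A →* Gd c hc2 hc1 :=
  MonoidHom.mk' (fun u =>
    ⟨fun x => l24 (lamb A x) - l24 (lamb A (u⁻¹ • x)), ↑u, fun x => by
      rw [r42_sub, r42_l24, r42_l24, lamb_shift hc2 hc1 A hA, ← add_assoc,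
        zmod2_add_self, zero_add]⟩)
    (by
      intro u v
      ext x
      · show l24 (lamb A x) - l24 (lamb A ((u * v)⁻¹ • x))
          = (l24 (lamb A x) - l24 (lamb A (u⁻¹ • x)))
            + (l24 (lamb A ((u : P)⁻¹ • x)) - l24 (lamb A (v⁻¹ • (u : P)⁻¹ • x)))
        have e1 : (u : P)⁻¹ • x = u⁻¹ • x := rfl
        have e2 : (u * v)⁻¹ • x = v⁻¹ • u⁻¹ • x := by rw [mul_inv_rev, mul_smul]
        rw [e1, e2]
        ring
      · rfl)

lemma proj_comp_spl (hc2 : c * c = 1) (hc1 : c ≠ 1) (A : Subgroup P)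
    (hA : ∀ g : P, g * c * g⁻¹ ∉ A) :
    (Gd.proj).comp (spl hc2 hc1 A hA) = A.subtype := by
  ext u
  rfl

end Split

end Stmt12Aux

namespace Stmt12Aux

/-- every open neighborhood of `1` in a profinite group contains an open normal subgroup. -/
lemma exists_openNormal_sub {F : Type} [Group F] [TopologicalSpace F] [IsTopologicalGroup F]
    [CompactSpace F] [T2Space F] [TotallyDisconnectedSpace F]
    {U : Set F} (hU : IsOpen U) (h1 : (1 : F) ∈ U) :
    ∃ N : OpenNormalSubgroup F, (N.toSubgroup : Set F) ⊆ U := by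
  obtain ⟨V, hV, h1V, hVU⟩ := compact_exists_isClopen_in_isOpen hU h1
  obtain ⟨N, hN⟩ := IsTopologicalGroup.exist_openNormalSubgroup_sub_clopen_nhds_of_one hV h1V
  exact ⟨N, fun z hz => hVU (hN hz)⟩

end Stmt12Aux

namespace Stmt12Aux

open Pointwise in
theorem core (G E F : Type)
    [Group G] [TopologicalSpace G] [IsTopologicalGroup G] [CompactSpace G] [T2Space G]
    [TotallyDisconnectedSpace G]
    [Group E] [TopologicalSpace E] [IsTopologicalGroup E] [CompactSpace E] [T2Space E]
    [TotallyDisconnectedSpace E]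
    [Group F] [TopologicalSpace F] [IsTopologicalGroup F] [CompactSpace F] [T2Space F]
    [TotallyDisconnectedSpace F]
    (ι₁ : G →* F) (ι₂ : E →* F)
    (hι₁c : Continuous ι₁) (hι₂c : Continuous ι₂)
    (hup : ∀ (H : Type) [Group H] [TopologicalSpace H] [IsTopologicalGroup H] [CompactSpace H]
      [T2Space H] [TotallyDisconnectedSpace H] (f : G →* H) (g : E →* H),
      Continuous f → Continuous g →
        ∃! h : F →* H, Continuous h ∧ h.comp ι₁ = f ∧ h.comp ι₂ = g)
    (G' : Subgroup G)
    (hG'tf : ∀ x ∈ G', IsOfFinOrder x → x = 1)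
    (hEtf : ∀ y : E, IsOfFinOrder y → y = 1)
    (φ : F →* Multiplicative (ZMod 2))
    (hφE : φ.comp ι₂ = 1) (hφG : (φ.comp ι₁).ker = G')
    (x : F) (hxker : x ∈ φ.ker) (hx2 : x * x = 1) : x = 1 := by
  classical
  -- injectivity of the two canonical maps
  obtain ⟨πG, ⟨hπGc, hπG1, hπG2⟩, -⟩ := hup G (MonoidHom.id G) 1 continuous_id
    (by show Continuous (fun _ : E => (1 : G)); exact continuous_const)
  obtain ⟨πE, ⟨hπEc, hπE1, hπE2⟩, -⟩ := hup E 1 (MonoidHom.id E)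
    (by show Continuous (fun _ : G => (1 : E)); exact continuous_const) continuous_id
  have hinj1 : Function.Injective ι₁ := by
    intro a b hab
    have := congrArg πG hab
    rwa [show πG (ι₁ a) = a from DFunLike.congr_fun hπG1 a,
      show πG (ι₁ b) = b from DFunLike.congr_fun hπG1 b] at this
  have hinj2 : Function.Injective ι₂ := by
    intro a b hab
    have := congrArg πE hab
    rwa [show πE (ι₂ a) = a from DFunLike.congr_fun hπE2 a,
      show πE (ι₂ b) = b from DFunLike.congr_fun hπE2 b] at this
  set S₁ : Set F := Set.range ι₁ with hS₁def
  set S₂ : Set F := Set.range ι₂ with hS₂def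
  have hS₁comp : IsCompact S₁ := isCompact_range hι₁c
  have hS₂comp : IsCompact S₂ := isCompact_range hι₂c
  -- Step 1: for every open normal subgroup `N`, some conjugate of `x` lies in
  -- `S₁ * N ∪ S₂ * N`.
  have step1 : ∀ N : OpenNormalSubgroup F,
      ∃ f : F, f * x * f⁻¹ ∈ S₁ * (N.toSubgroup : Set F) ∪ S₂ * (N.toSubgroup : Set F) := by
    intro N
    set P := F ⧸ N.toSubgroup with hPdef
    haveI hPfin : Finite P := N.toSubgroup.quotient_finite_of_isOpen N.isOpen
    haveI hPdisc : DiscreteTopology P := QuotientGroup.discreteTopology N.isOpen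
    set q : F →* P := QuotientGroup.mk' N.toSubgroup with hqdef
    have hqc : Continuous q := continuous_quot_mk
    have hqsurj : Function.Surjective q := QuotientGroup.mk'_surjective N.toSubgroup
    set A : Subgroup P := (q.comp ι₁).range with hAdef
    set B : Subgroup P := (q.comp ι₂).range with hBdef
    by_cases hcase : ∃ f : F, q (f * x * f⁻¹) ∈ A ∨ q (f * x * f⁻¹) ∈ B
    · obtain ⟨f, hf | hf⟩ := hcase
      · obtain ⟨a, ha⟩ := hf
        refine ⟨f, Or.inl ?_⟩
        rw [Set.mem_mul]
        refine ⟨ι₁ a, Set.mem_range_self a, (ι₁ a)⁻¹ * (f * x * f⁻¹), ?_, by group⟩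
        have : (QuotientGroup.mk (ι₁ a) : P) = QuotientGroup.mk (f * x * f⁻¹) := ha
        exact QuotientGroup.eq.mp this
      · obtain ⟨a, ha⟩ := hf
        refine ⟨f, Or.inr ?_⟩
        rw [Set.mem_mul]
        refine ⟨ι₂ a, Set.mem_range_self a, (ι₂ a)⁻¹ * (f * x * f⁻¹), ?_, by group⟩
        have : (QuotientGroup.mk (ι₂ a) : P) = QuotientGroup.mk (f * x * f⁻¹) := ha
        exact QuotientGroup.eq.mp this
    · exfalso
      push_neg at hcase
      set c : P := q x with hcdef
      have hc2 : c * c = 1 := by rw [hcdef, ← map_mul, hx2, map_one]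
      have hc1 : c ≠ 1 := by
        intro hcon
        have h1 : q (1 * x * 1⁻¹) ∈ A := by
          have : q (1 * x * 1⁻¹) = (1 : P) := by
            rw [one_mul, inv_one, mul_one, ← hcdef, hcon]
          rw [this]; exact A.one_mem
        exact (hcase 1).1 h1
      have hA : ∀ g : P, g * c * g⁻¹ ∉ A := by
        intro g hg
        obtain ⟨f, rfl⟩ := hqsurj g
        have : q f * c * (q f)⁻¹ = q (f * x * f⁻¹) := by
          rw [hcdef, ← map_inv, ← map_mul, ← map_mul]
        exact (hcase f).1 (by rwa [this] at hg)
      have hB : ∀ g : P, g * c * g⁻¹ ∉ B := by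
        intro g hg
        obtain ⟨f, rfl⟩ := hqsurj g
        have : q f * c * (q f)⁻¹ = q (f * x * f⁻¹) := by
          rw [hcdef, ← map_inv, ← map_mul, ← map_mul]
        exact (hcase f).2 (by rwa [this] at hg)
      -- build the gadget and the lifts
      letI : TopologicalSpace (Gd c hc2 hc1) := ⊥
      haveI : DiscreteTopology (Gd c hc2 hc1) := ⟨rfl⟩
      haveI : Finite (Gd c hc2 hc1) := by
        have : Function.Injective
            (fun z : Gd c hc2 hc1 => (z.f, z.p)) := by
          intro a b hab
          ext1
          · exact congrArg Prod.fst hab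
          · exact congrArg Prod.snd hab
        exact Finite.of_injective _ this
      haveI : IsTopologicalGroup (Gd c hc2 hc1) :=
        { continuous_mul := continuous_of_discreteTopology
          continuous_inv := continuous_of_discreteTopology }
      set ft : G →* Gd c hc2 hc1 := (spl hc2 hc1 A hA).comp ((q.comp ι₁).rangeRestrict)
        with hftdef
      set gt : E →* Gd c hc2 hc1 := (spl hc2 hc1 B hB).comp ((q.comp ι₂).rangeRestrict)
        with hgtdef
      have hftc : Continuous ft := by
        have inner : Continuous ⇑((q.comp ι₁).rangeRestrict) := (hqc.comp hι₁c).subtype_mk _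
        have outer : Continuous ⇑(spl hc2 hc1 A hA) := continuous_of_discreteTopology
        exact (outer.comp inner : _)
      have hgtc : Continuous gt := by
        have inner : Continuous ⇑((q.comp ι₂).rangeRestrict) := (hqc.comp hι₂c).subtype_mk _
        have outer : Continuous ⇑(spl hc2 hc1 B hB) := continuous_of_discreteTopology
        exact (outer.comp inner : _)
      obtain ⟨ht, ⟨htc, ht1, ht2⟩, -⟩ := hup (Gd c hc2 hc1) ft gt hftc hgtc
      -- `proj ∘ ht = q` by uniqueness
      obtain ⟨h₀, -, h₀uniq⟩ := hup P (q.comp ι₁) (q.comp ι₂) (hqc.comp hι₁c) (hqc.comp hι₂c)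
      have hprojc : Continuous ⇑(Gd.proj : Gd c hc2 hc1 →* P) := continuous_of_discreteTopology
      have e1 : (Gd.proj : Gd c hc2 hc1 →* P).comp ht = q := by
        have hcont : Continuous ⇑((Gd.proj : Gd c hc2 hc1 →* P).comp ht) :=
          (hprojc.comp htc : _)
        have c1 : ((Gd.proj : Gd c hc2 hc1 →* P).comp ht).comp ι₁ = q.comp ι₁ := by
          rw [MonoidHom.comp_assoc, ht1, hftdef, ← MonoidHom.comp_assoc,
            proj_comp_spl hc2 hc1 A hA, MonoidHom.subtype_comp_rangeRestrict]
        have c2 : ((Gd.proj : Gd c hc2 hc1 →* P).comp ht).comp ι₂ = q.comp ι₂ := by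
          rw [MonoidHom.comp_assoc, ht2, hgtdef, ← MonoidHom.comp_assoc,
            proj_comp_spl hc2 hc1 B hB, MonoidHom.subtype_comp_rangeRestrict]
        have u1 := h₀uniq ((Gd.proj : Gd c hc2 hc1 →* P).comp ht) ⟨hcont, c1, c2⟩
        have u2 := h₀uniq q ⟨hqc, rfl, rfl⟩
        rw [u1, u2]
      have hzp : (ht x).p = c := by
        have := DFunLike.congr_fun e1 x
        exact this
      have hz2 : ht x * ht x = 1 := by rw [← map_mul, hx2, map_one]
      exact Gd.sq_ne_one_of_proj_eq (ht x) hzp hz2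
  -- Step 2: compactness over all open normal subgroups
  set T : OpenNormalSubgroup F → Set F :=
    fun N => {f : F | f * x * f⁻¹ ∈ S₁ * (N.toSubgroup : Set F) ∪ S₂ * (N.toSubgroup : Set F)}
    with hTdef
  have hconj : Continuous fun f : F => f * x * f⁻¹ :=
    (continuous_id.mul continuous_const).mul continuous_inv
  have hTclosed : ∀ N, IsClosed (T N) := by
    intro N
    have hNcomp : IsCompact (N.toSubgroup : Set F) :=
      (OpenSubgroup.isClosed N.toOpenSubgroup).isCompact
    have h1 : IsClosed (S₁ * (N.toSubgroup : Set F) ∪ S₂ * (N.toSubgroup : Set F)) :=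
      ((hS₁comp.mul hNcomp).union (hS₂comp.mul hNcomp)).isClosed
    exact h1.preimage hconj
  have hTdir : Directed (fun a b : Set F => a ⊇ b) T := by
    intro N₁ N₂
    refine ⟨N₁ ⊓ N₂, fun f hf => ?_, fun f hf => ?_⟩
    · rcases hf with hf | hf
      · exact Or.inl (Set.mul_subset_mul_left (fun z hz => hz.1) hf)
      · exact Or.inr (Set.mul_subset_mul_left (fun z hz => hz.1) hf)
    · rcases hf with hf | hf
      · exact Or.inl (Set.mul_subset_mul_left (fun z hz => hz.2) hf)
      · exact Or.inr (Set.mul_subset_mul_left (fun z hz => hz.2) hf)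
  haveI : Nonempty (OpenNormalSubgroup F) :=
    ⟨{ toOpenSubgroup := ⟨⊤, by show IsOpen (Set.univ : Set F); exact isOpen_univ⟩,
       isNormal' := inferInstance }⟩
  obtain ⟨f₀, hf₀⟩ := IsCompact.nonempty_iInter_of_directed_nonempty_isCompact_isClosed
    T hTdir (fun N => step1 N) (fun N => (hTclosed N).isCompact) hTclosed
  have hf₀' : ∀ N : OpenNormalSubgroup F,
      f₀ * x * f₀⁻¹ ∈ S₁ * (N.toSubgroup : Set F) ∪ S₂ * (N.toSubgroup : Set F) :=
    fun N => Set.mem_iInter.mp hf₀ N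
  set y : F := f₀ * x * f₀⁻¹ with hydef
  have hy : y ∈ S₁ ∪ S₂ := by
    by_contra hy
    set V : Set F := (S₁ ∪ S₂)⁻¹ * {y} with hVdef
    have hVcomp : IsCompact V := ((hS₁comp.union hS₂comp).inv).mul isCompact_singleton
    have h1V : (1 : F) ∉ V := by
      intro h1V
      rw [hVdef, Set.mem_mul] at h1V
      obtain ⟨a, ha, b, hb, hab⟩ := h1V
      rw [Set.mem_singleton_iff] at hb
      subst hb
      rw [Set.mem_inv] at ha
      apply hy
      have h2 : a⁻¹ = y := inv_eq_of_mul_eq_one_right hab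
      rwa [← h2]
    obtain ⟨N, hN⟩ := exists_openNormal_sub (hVcomp.isClosed.isOpen_compl)
      (by simpa using h1V)
    rcases hf₀' N with hmem | hmem <;>
    · rw [Set.mem_mul] at hmem
      obtain ⟨s, hs, n, hn, hsn⟩ := hmem
      have hnV : n ∈ V := by
        rw [hVdef, Set.mem_mul]
        refine ⟨s⁻¹, ?_, y, Set.mem_singleton y, by rw [← hsn]; group⟩
        rw [Set.mem_inv, inv_inv]
        first
        | exact Or.inl hs
        | exact Or.inr hs
      exact hN hn hnV
  -- Endgame: the conjugate `y` lies in `S₁` or `S₂`, use torsion-freeness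
  have hyy : y * y = 1 := by
    have h : y * y = f₀ * (x * x) * f₀⁻¹ := by rw [hydef]; group
    rw [h, hx2, mul_one, mul_inv_cancel]
  have hxy : x = f₀⁻¹ * y * f₀ := by rw [hydef]; group
  rcases hy with hy1 | hy2
  · obtain ⟨a, ha⟩ := hy1
    have haa : a * a = 1 := by
      apply hinj1
      rw [map_mul, map_one, ha, hyy]
    have hφy : φ y = 1 := by
      have hφx : φ x = 1 := hxker
      rw [hydef, map_mul, map_mul, map_inv, mul_comm (φ f₀) (φ x), mul_assoc,
        mul_inv_cancel, mul_one, hφx]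
    have haG' : a ∈ G' := by
      rw [← hφG]
      show φ (ι₁ a) = 1
      rw [ha, hφy]
    have hafin : IsOfFinOrder a :=
      isOfFinOrder_iff_pow_eq_one.mpr ⟨2, two_pos, by rw [pow_two, haa]⟩
    have ha1 : a = 1 := hG'tf a haG' hafin
    rw [hxy, ← ha, ha1, map_one, mul_one, inv_mul_cancel]
  · obtain ⟨b, hb⟩ := hy2
    have hbb : b * b = 1 := by
      apply hinj2
      rw [map_mul, map_one, hb, hyy]
    have hbfin : IsOfFinOrder b :=
      isOfFinOrder_iff_pow_eq_one.mpr ⟨2, two_pos, by rw [pow_two, hbb]⟩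
    have hb1 : b = 1 := hEtf b hbfin
    rw [hxy, ← hb, hb1, map_one, mul_one, inv_mul_cancel]

end Stmt12Aux


/-- Let `G` be a profinite group with an open subgroup `G'` of index ≤ 2 that
is torsion-free, `E` a torsion-free profinite group, and `F = G ⋆ E` the free profinite
product. Let `φ : F → ℤ/2ℤ` be the homomorphism determined by `E → 1` and `G → G/G'`, and
`G'_⋆ = ker φ`. Then `G'_⋆` contains no involutions; in particular the set of involutions
of `F` is closed. -/
theorem stmt_12 (G E F : Type)
    [Group G] [TopologicalSpace G] [IsTopologicalGroup G] [CompactSpace G] [T2Space G]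
    [TotallyDisconnectedSpace G]
    [Group E] [TopologicalSpace E] [IsTopologicalGroup E] [CompactSpace E] [T2Space E]
    [TotallyDisconnectedSpace E]
    [Group F] [TopologicalSpace F] [IsTopologicalGroup F] [CompactSpace F] [T2Space F]
    [TotallyDisconnectedSpace F]
    (ι₁ : G →* F) (ι₂ : E →* F) (hco : IsProfiniteCoprod G E F ι₁ ι₂)
    (G' : Subgroup G) (hG'open : IsOpen (G' : Set G)) (hG'index : G'.index ≤ 2)
    (hG'tf : ∀ x ∈ G', IsOfFinOrder x → x = 1)
    (hEtf : ∀ y : E, IsOfFinOrder y → y = 1)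
    (φ : F →* Multiplicative (ZMod 2)) (hφopen : IsOpen (φ.ker : Set F))
    (hφE : φ.comp ι₂ = 1) (hφG : (φ.comp ι₁).ker = G') :
    (∀ x ∈ φ.ker, x * x = 1 → x = 1) ∧ IsClosed {x : F | x * x = 1 ∧ x ≠ 1} := by
  obtain ⟨hι₁c, hι₂c, hup⟩ := hco
  have key : ∀ x ∈ φ.ker, x * x = 1 → x = 1 := fun x hx h2 =>
    Stmt12Aux.core G E F ι₁ ι₂ hι₁c hι₂c hup G' hG'tf hEtf φ hφE hφG x hx h2
  refine ⟨key, ?_⟩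
  have hset : {x : F | x * x = 1 ∧ x ≠ 1} = {x : F | x * x = 1} ∩ ((φ.ker : Set F))ᶜ := by
    ext z
    simp only [Set.mem_setOf_eq, Set.mem_inter_iff, Set.mem_compl_iff, SetLike.mem_coe]
    constructor
    · rintro ⟨h1, h2⟩
      exact ⟨h1, fun hk => h2 (key z hk h1)⟩
    · rintro ⟨h1, h2⟩
      refine ⟨h1, fun hz => h2 ?_⟩
      rw [hz]; exact φ.ker.one_mem
  rw [hset]
  refine IsClosed.inter ?_ hφopen.isClosed_compl
  have h : {x : F | x * x = 1} = (fun x : F => x * x) ⁻¹' {1} := rfl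
  rw [h]
  exact IsClosed.preimage (continuous_id.mul continuous_id) isClosed_singleton
end

section
/- Let G be a projective profinite group (i.e., every finite embedding problem for G with surjective data has a weak solution) and let E be a projective profinite group. Then the free profinite product G ⋆ E is projective. -/
/-- A profinite group is projective if every finite embedding problem (with surjective
data) for it has a solution; continuity is expressed via openness of kernels. -/
def IsProjectiveProfinite (H : Type) [Group H] [TopologicalSpace H] : Prop :=
  ∀ (A B : Type) [Group A] [Group B] [Finite A] [Finite B] (α : B →* A) (φ : H →* A),
    Function.Surjective α → IsOpen (φ.ker : Set H) →
      ∃ ψ : H →* B, IsOpen (ψ.ker : Set H) ∧ α.comp ψ = φ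

/-- A hom from a topological group to a discrete group with open kernel is continuous. -/
lemma aux_cont {H A : Type} [Group H] [TopologicalSpace H] [IsTopologicalGroup H]
    [Group A] [TopologicalSpace A] [DiscreteTopology A]
    (f : H →* A) (h : IsOpen (f.ker : Set H)) : Continuous f := by
  apply continuous_of_continuousAt_one f
  unfold ContinuousAt
  rw [map_one]
  intro s hs
  rw [Filter.mem_map]
  refine Filter.mem_of_superset (h.mem_nhds ?_) ?_
  · exact MonoidHom.mem_ker.mpr (map_one f)
  · intro x hx
    simp only [Set.mem_preimage]
    rw [SetLike.mem_coe, MonoidHom.mem_ker] at hx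
    rw [hx]
    exact mem_of_mem_nhds hs


/-- the free profinite product of two projective profinite groups is
projective. -/
theorem stmt_14 (G E F : Type)
    [Group G] [TopologicalSpace G] [IsTopologicalGroup G] [CompactSpace G] [T2Space G]
    [TotallyDisconnectedSpace G]
    [Group E] [TopologicalSpace E] [IsTopologicalGroup E] [CompactSpace E] [T2Space E]
    [TotallyDisconnectedSpace E]
    [Group F] [TopologicalSpace F] [IsTopologicalGroup F] [CompactSpace F] [T2Space F]
    [TotallyDisconnectedSpace F]
    (ι₁ : G →* F) (ι₂ : E →* F) (hco : IsProfiniteCoprod G E F ι₁ ι₂)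
    (hG : IsProjectiveProfinite G) (hE : IsProjectiveProfinite E) :
    IsProjectiveProfinite F := by
  obtain ⟨hc₁, hc₂, huniv⟩ := hco
  intro A B _ _ _ _ α φ hα hker
  letI : TopologicalSpace A := ⊥
  haveI : DiscreteTopology A := ⟨rfl⟩
  letI : TopologicalSpace B := ⊥
  haveI : DiscreteTopology B := ⟨rfl⟩
  haveI : ContinuousMul A := ⟨continuous_of_discreteTopology⟩
  haveI : ContinuousInv A := ⟨continuous_of_discreteTopology⟩
  haveI : IsTopologicalGroup A := ⟨⟩
  haveI : ContinuousMul B := ⟨continuous_of_discreteTopology⟩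
  haveI : ContinuousInv B := ⟨continuous_of_discreteTopology⟩
  haveI : IsTopologicalGroup B := ⟨⟩
  have hφc : Continuous φ := aux_cont φ hker
  have hk₁ : IsOpen ((φ.comp ι₁).ker : Set G) := by
    have : ((φ.comp ι₁).ker : Set G) = ι₁ ⁻¹' (φ.ker : Set F) := rfl
    rw [this]; exact hker.preimage hc₁
  have hk₂ : IsOpen ((φ.comp ι₂).ker : Set E) := by
    have : ((φ.comp ι₂).ker : Set E) = ι₂ ⁻¹' (φ.ker : Set F) := rfl
    rw [this]; exact hker.preimage hc₂
  obtain ⟨ψ₁, hψ₁o, hψ₁⟩ := hG A B α (φ.comp ι₁) hα hk₁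
  obtain ⟨ψ₂, hψ₂o, hψ₂⟩ := hE A B α (φ.comp ι₂) hα hk₂
  obtain ⟨h, ⟨hhc, hh₁, hh₂⟩, huniq⟩ := huniv B ψ₁ ψ₂ (aux_cont ψ₁ hψ₁o) (aux_cont ψ₂ hψ₂o)
  refine ⟨h, ?_, ?_⟩
  · have : (h.ker : Set F) = h ⁻¹' {1} := rfl
    rw [this]; exact (isOpen_discrete _).preimage hhc
  · obtain ⟨hφ', _, hu⟩ := huniv A (φ.comp ι₁) (φ.comp ι₂) (hφc.comp hc₁) (hφc.comp hc₂)
    have e1 := hu (α.comp h) ⟨by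
      rw [MonoidHom.coe_comp]
      exact Continuous.comp (continuous_of_discreteTopology : Continuous (⇑α)) hhc, by
      rw [MonoidHom.comp_assoc, hh₁, hψ₁], by rw [MonoidHom.comp_assoc, hh₂, hψ₂]⟩
    have e2 := hu φ ⟨hφc, rfl, rfl⟩
    rw [e1, e2]
end
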